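/- Let (a_1,…,a_m) be a telescopic sequence. Then for every 2 ≤ i ≤ m there exist nonnegative integers k_1,…,k_{i−1} with 0 ≤ k_j ≤ d_{j−1}/d_j − 1 for all 2 ≤ j ≤ i−1 (k_1 unrestricted) such that a_i·d_{i−1}/d_i = a_1k_1 + ⋯ + a_{i−1}k_{i−1}. -/

import Mathlib

/-- `dseq a i = gcd(a_1, …, a_i)`. -/
def dseq (a : ℕ → ℕ) (i : ℕ) : ℕ := (Finset.Icc 1 i).gcd a

/-- The telescopic condition:
`a_i/d_i ∈ (a_1/d_{i-1})ℤ_{≥0} + ⋯ + (a_{i-1}/d_{i-1})ℤ_{≥0}` for `2 ≤ i ≤ m`. -/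
def Telescopic (m : ℕ) (a : ℕ → ℕ) : Prop :=
  ∀ i, 2 ≤ i → i ≤ m →
    ∃ k : ℕ → ℕ,
      a i / dseq a i = ∑ j ∈ Finset.Icc 1 (i - 1), (a j / dseq a (i - 1)) * k j

lemma dseq_dvd (a : ℕ → ℕ) {l i : ℕ} (h1 : 1 ≤ l) (h2 : l ≤ i) :
    dseq a i ∣ a l :=
  Finset.gcd_dvd (Finset.mem_Icc.mpr ⟨h1, h2⟩)

lemma dseq_dvd_dseq (a : ℕ → ℕ) {i j : ℕ} (h : j ≤ i) :
    dseq a i ∣ dseq a j :=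
  Finset.dvd_gcd fun l hl => by
    obtain ⟨hl1, hl2⟩ := Finset.mem_Icc.mp hl
    exact dseq_dvd a hl1 (hl2.trans h)

lemma dseq_pos (a : ℕ → ℕ) {i : ℕ} (hi : 1 ≤ i) (h1 : 0 < a 1) : 0 < dseq a i := by
  rcases Nat.eq_zero_or_pos (dseq a i) with h | h
  · have hd := dseq_dvd a le_rfl hi
    rw [h] at hd
    have := Nat.eq_zero_of_zero_dvd hd
    omega
  · exact h

/-- Key step: multiplying the telescopic relation at `i` by `d_{i-1}` gives
a (not yet bounded) representation of `a_i · (d_{i-1}/d_i)`. -/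
lemma keystep (m : ℕ) (a : ℕ → ℕ) (h1 : 0 < a 1) (htel : Telescopic m a)
    {i : ℕ} (hi2 : 2 ≤ i) (him : i ≤ m) :
    ∃ k : ℕ → ℕ,
      a i * (dseq a (i - 1) / dseq a i) = ∑ l ∈ Finset.Icc 1 (i - 1), a l * k l := by
  obtain ⟨k, hk⟩ := htel i hi2 him
  refine ⟨k, ?_⟩
  have hdd : dseq a i ∣ dseq a (i - 1) := dseq_dvd_dseq a (by omega)
  have hda : dseq a i ∣ a i := dseq_dvd a (by omega) le_rfl
  have lhs : a i * (dseq a (i - 1) / dseq a i) = (a i / dseq a i) * dseq a (i - 1) := by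
    conv_lhs => rw [← Nat.div_mul_cancel hda]
    rw [mul_assoc, Nat.mul_div_cancel' hdd]
  rw [lhs, hk, Finset.sum_mul]
  refine Finset.sum_congr rfl fun l hl => ?_
  obtain ⟨hl1, hl2⟩ := Finset.mem_Icc.mp hl
  have hdl : dseq a (i - 1) ∣ a l := dseq_dvd a hl1 hl2
  rw [mul_right_comm, Nat.div_mul_cancel hdl]

/-- Any representation over `a_1, …, a_j` can be turned into a bounded one. -/
lemma bounded_rep (m : ℕ) (a : ℕ → ℕ) (h1 : 0 < a 1) (htel : Telescopic m a) :
    ∀ j, 1 ≤ j → j ≤ m → ∀ c : ℕ → ℕ, ∃ k : ℕ → ℕ,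
      (∀ l, 2 ≤ l → l ≤ j → k l ≤ dseq a (l - 1) / dseq a l - 1) ∧
      ∑ l ∈ Finset.Icc 1 j, a l * c l = ∑ l ∈ Finset.Icc 1 j, a l * k l := by
  intro j hj
  induction j, hj using Nat.le_induction with
  | base => exact fun _ c => ⟨c, fun l h2 hl => by omega, rfl⟩
  | succ j hj ih =>
    intro hjm c
    have hj1 : (j + 1 : ℕ) - 1 = j := rfl
    set D := dseq a j / dseq a (j + 1) with hD
    have hd1 : 0 < dseq a (j + 1) := dseq_pos a (by omega) h1
    have hd0 : 0 < dseq a j := dseq_pos a hj h1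
    have hdd : dseq a (j + 1) ∣ dseq a j := dseq_dvd_dseq a (by omega)
    have hDpos : 0 < D := Nat.div_pos (Nat.le_of_dvd hd0 hdd) hd1
    obtain ⟨k0, hk0⟩ := keystep m a h1 htel (show 2 ≤ j + 1 by omega) hjm
    rw [hj1] at hk0
    set q := c (j + 1) / D with hq
    set r := c (j + 1) % D with hr
    have hcr : c (j + 1) = D * q + r := (Nat.div_add_mod _ _).symm
    have hrD : r < D := Nat.mod_lt _ hDpos
    obtain ⟨k', hk'b, hk's⟩ := ih (by omega) (fun l => c l + q * k0 l)
    refine ⟨fun l => if l = j + 1 then r else k' l, ?_, ?_⟩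
    · intro l h2 hl
      by_cases hcase : l = j + 1
      · subst hcase
        have heq : (fun l => if l = j + 1 then r else k' l) (j + 1) = r := if_pos rfl
        rw [heq, hj1]
        omega
      · have heq : (fun l' => if l' = j + 1 then r else k' l') l = k' l := if_neg hcase
        rw [heq]
        exact hk'b l h2 (by omega)
    · rw [Finset.sum_Icc_succ_top (by omega : 1 ≤ j + 1),
        Finset.sum_Icc_succ_top (by omega : 1 ≤ j + 1)]
      simp only [if_pos rfl]
      have hstep : ∑ l ∈ Finset.Icc 1 j, a l * c l + a (j + 1) * c (j + 1)
          = ∑ l ∈ Finset.Icc 1 j, a l * (c l + q * k0 l) + a (j + 1) * r := by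
        have hsplit : ∑ l ∈ Finset.Icc 1 j, a l * (c l + q * k0 l)
            = ∑ l ∈ Finset.Icc 1 j, a l * c l + q * ∑ l ∈ Finset.Icc 1 j, a l * k0 l := by
          rw [Finset.mul_sum, ← Finset.sum_add_distrib]
          exact Finset.sum_congr rfl fun l _ => by ring
        rw [hsplit, ← hk0, ← hD, hcr]
        ring
      rw [hstep, hk's]
      congr 1
      refine Finset.sum_congr rfl fun l hl => ?_
      obtain ⟨hl1, hl2⟩ := Finset.mem_Icc.mp hl
      rw [if_neg (by omega)]

/-- For a telescopic sequence and `2 ≤ i ≤ m`, there exist nonnegative integers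
`k_1, …, k_{i-1}` with `0 ≤ k_j ≤ d_{j-1}/d_j - 1` for all `2 ≤ j ≤ i-1`
(`k_1` unrestricted) such that `a_i · d_{i-1}/d_i = a_1 k_1 + ⋯ + a_{i-1} k_{i-1}`. -/
theorem telescopic_bounded_representation
    (m : ℕ) (hm : 2 ≤ m) (a : ℕ → ℕ)
    (hpos : ∀ i, 1 ≤ i → i ≤ m → 0 < a i)
    (hgcd : (Finset.Icc 1 m).gcd a = 1)
    (htel : Telescopic m a)
    (i : ℕ) (hi2 : 2 ≤ i) (him : i ≤ m) :
    ∃ k : ℕ → ℕ,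
      (∀ j, 2 ≤ j → j ≤ i - 1 → k j ≤ dseq a (j - 1) / dseq a j - 1) ∧
      a i * (dseq a (i - 1) / dseq a i) = ∑ j ∈ Finset.Icc 1 (i - 1), a j * k j := by
  have h1 : 0 < a 1 := hpos 1 le_rfl (by omega)
  obtain ⟨c, hc⟩ := keystep m a h1 htel hi2 him
  obtain ⟨k, hkb, hks⟩ := bounded_rep m a h1 htel (i - 1) (by omega) (by omega) c
  exact ⟨k, hkb, by rw [hc, hks]⟩
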